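/- For the Fourier sine/cosine basis with n = 2m even, the complex-zero intensity function h_n depends only on the imaginary part of its argument: for all z, z' ∈ ℂ with Im(z) = Im(z') ≠ 0 and D_0(z) ≠ 0, one has D_0(z') ≠ 0 and h_n(z) = h_n(z'). -/

import Mathlib

open Complex Finset

lemma sum_split' {M : Type*} [AddCommMonoid M] (n : ℕ) (g : ℕ → M) :
    ∑ j ∈ Finset.range (2*n+1), g j
      = g 0 + ∑ k ∈ Finset.range n, (g (2*(k+1)-1) + g (2*(k+1))) := by
  induction n with
  | zero => simp
  | succ n ih =>
      have e1 : 2*(n+1)+1 = (2*n+1) + 1 + 1 := by omega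
      have e2 : 2*(n+1)-1 = 2*n+1 := by omega
      have e3 : 2*(n+1) = 2*n+1+1 := by omega
      rw [e1, Finset.sum_range_succ, Finset.sum_range_succ, ih, Finset.sum_range_succ, e2, e3]
      abel

lemma deriv_sin_mul' (c z : ℂ) :
    deriv (fun w => Complex.sin (c * w)) z = c * Complex.cos (c * z) := by
  have h := (Complex.hasDerivAt_sin (c*z)).comp z ((hasDerivAt_id z).const_mul c)
  simpa [mul_comm, Function.comp_def] using h.deriv

lemma deriv_cos_mul' (c z : ℂ) :
    deriv (fun w => Complex.cos (c * w)) z = -c * Complex.sin (c * z) := by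
  have h := (Complex.hasDerivAt_cos (c*z)).comp z ((hasDerivAt_id z).const_mul c)
  have := h.deriv
  simp only [Function.comp_def, id_eq] at this ⊢
  rw [this]; ring

lemma abs2' (v : ℂ) : ((‖v‖ : ℝ) : ℂ)^2 = v * (starRingEnd ℂ) v := by
  rw [show ((‖v‖ : ℝ) : ℂ)^2 = ((‖v‖ ^2 : ℝ) : ℂ) by push_cast; ring,
    Complex.sq_norm, Complex.mul_conj]

lemma hc' (z z' : ℂ) (him : z.im = z'.im) :
    (starRingEnd ℂ) z - z = (starRingEnd ℂ) z' - z' := by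
  have h1 := Complex.sub_conj z
  have h2 := Complex.sub_conj z'
  have h3 : (z.im : ℂ) = (z'.im : ℂ) := Complex.ofReal_inj.mpr him
  push_cast at h1 h2
  linear_combination h2 - h1 - 2 * Complex.I * h3

lemma B1pair (c w w' : ℂ) (hcc : (starRingEnd ℂ) c = c)
    (hw : (starRingEnd ℂ) w - w = (starRingEnd ℂ) w' - w') :
    (starRingEnd ℂ) (Complex.sin (c*w)) * (c * Complex.cos (c*w))
      + (starRingEnd ℂ) (Complex.cos (c*w)) * (-c * Complex.sin (c*w))
    = (starRingEnd ℂ) (Complex.sin (c*w')) * (c * Complex.cos (c*w'))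
      + (starRingEnd ℂ) (Complex.cos (c*w')) * (-c * Complex.sin (c*w')) := by
  have lem : ∀ u : ℂ, (starRingEnd ℂ) (Complex.sin (c*u)) * (c * Complex.cos (c*u))
      + (starRingEnd ℂ) (Complex.cos (c*u)) * (-c * Complex.sin (c*u))
      = c * Complex.sin (c * ((starRingEnd ℂ) u - u)) := by
    intro u
    rw [← Complex.sin_conj, ← Complex.cos_conj, map_mul, hcc, mul_sub, Complex.sin_sub]
    ring
  rw [lem, lem, hw]

lemma B0pair (c w w' : ℂ) (hcc : (starRingEnd ℂ) c = c)
    (hw : (starRingEnd ℂ) w - w = (starRingEnd ℂ) w' - w') :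
    ‖Complex.sin (c*w)‖^2 + ‖Complex.cos (c*w)‖^2
      = ‖Complex.sin (c*w')‖^2 + ‖Complex.cos (c*w')‖^2 := by
  have key : ∀ u : ℂ, ((‖Complex.sin (c*u)‖^2 + ‖Complex.cos (c*u)‖^2 : ℝ) : ℂ)
      = Complex.cos (c * ((starRingEnd ℂ) u - u)) := by
    intro u
    push_cast
    rw [abs2', abs2', ← Complex.sin_conj, ← Complex.cos_conj, map_mul, hcc, mul_sub, Complex.cos_sub]
    ring
  have : ((‖Complex.sin (c*w)‖^2 + ‖Complex.cos (c*w)‖^2 : ℝ) : ℂ)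
      = ((‖Complex.sin (c*w')‖^2 + ‖Complex.cos (c*w')‖^2 : ℝ) : ℂ) := by
    rw [key, key, hw]
  exact_mod_cast this

lemma B2pair (c w w' : ℂ) (hcc : (starRingEnd ℂ) c = c)
    (hw : (starRingEnd ℂ) w - w = (starRingEnd ℂ) w' - w') :
    ‖c * Complex.cos (c*w)‖^2 + ‖-c * Complex.sin (c*w)‖^2
      = ‖c * Complex.cos (c*w')‖^2 + ‖-c * Complex.sin (c*w')‖^2 := by
  have key : ∀ u : ℂ, ((‖c * Complex.cos (c*u)‖^2 + ‖-c * Complex.sin (c*u)‖^2 : ℝ) : ℂ)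
      = c^2 * Complex.cos (c * ((starRingEnd ℂ) u - u)) := by
    intro u
    push_cast
    rw [abs2', abs2', map_mul, map_mul, map_neg, hcc, ← Complex.sin_conj, ← Complex.cos_conj,
      map_mul, hcc, mul_sub, Complex.cos_sub]
    ring
  have : ((‖c * Complex.cos (c*w)‖^2 + ‖-c * Complex.sin (c*w)‖^2 : ℝ) : ℂ)
      = ((‖c * Complex.cos (c*w')‖^2 + ‖-c * Complex.sin (c*w')‖^2 : ℝ) : ℂ) := by
    rw [key, key, hw]
  exact_mod_cast this

/-- **(Vanderbei, Fourier sine/cosine series.)** For the sine/cosine basis with `n = 2m`, the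
complex-zero intensity `h_n` depends only on the imaginary part: if `Im z = Im z' ≠ 0` and
`D₀(z) ≠ 0`, then `D₀(z') ≠ 0` and `h_n(z) = h_n(z')`. -/
theorem fourier_intensity_depends_only_on_im
    (m : ℕ) (hm : 0 < m)
    (f : ℕ → ℂ → ℂ)
    (hf0 : ∀ z, f 0 z = 1)
    (hfodd : ∀ k : ℕ, 1 ≤ k → k ≤ m → ∀ z, f (2 * k - 1) z = Complex.sin ((k : ℂ) * z))
    (hfeven : ∀ k : ℕ, 1 ≤ k → k ≤ m → ∀ z, f (2 * k) z = Complex.cos ((k : ℂ) * z))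
    (A0 A1 B1 : ℂ → ℂ) (B0 B2 D0 : ℂ → ℝ) (h : ℂ → ℝ)
    (hA0 : ∀ z, A0 z = ∑ j ∈ Finset.range (2 * m + 1), (f j z) ^ 2)
    (hA1 : ∀ z, A1 z = ∑ j ∈ Finset.range (2 * m + 1), f j z * deriv (f j) z)
    (hB1 : ∀ z, B1 z = ∑ j ∈ Finset.range (2 * m + 1),
        (starRingEnd ℂ) (f j z) * deriv (f j) z)
    (hB0 : ∀ z, B0 z = ∑ j ∈ Finset.range (2 * m + 1), ‖f j z‖ ^ 2)
    (hB2 : ∀ z, B2 z = ∑ j ∈ Finset.range (2 * m + 1), ‖deriv (f j) z‖ ^ 2)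
    (hD0 : ∀ z, D0 z = Real.sqrt ((B0 z) ^ 2 - ‖A0 z‖ ^ 2))
    (hh : ∀ z, h z =
      (B2 z * (D0 z) ^ 2 - B0 z * (‖B1 z‖ ^ 2 + ‖A1 z‖ ^ 2)
        + (A0 z * B1 z * (starRingEnd ℂ) (A1 z)
            + (starRingEnd ℂ) (A0 z * B1 z) * A1 z).re)
        / (Real.pi * (D0 z) ^ 3)) :
    ∀ z z' : ℂ, z.im = z'.im → z.im ≠ 0 → D0 z ≠ 0 → D0 z' ≠ 0 ∧ h z = h z' := by
  intro z z' him _ hD0z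
  have hc : (starRingEnd ℂ) z - z = (starRingEnd ℂ) z' - z' := hc' z z' him
  have hfs : ∀ k : ℕ, k < m → f (2*(k+1)-1) = fun w => Complex.sin (((k+1 : ℕ) : ℂ) * w) :=
    fun k hk => funext (hfodd (k+1) (by omega) (by omega))
  have hfc : ∀ k : ℕ, k < m → f (2*(k+1)) = fun w => Complex.cos (((k+1 : ℕ) : ℂ) * w) :=
    fun k hk => funext (hfeven (k+1) (by omega) (by omega))
  have hf0' : f 0 = fun _ => (1:ℂ) := funext hf0
  have hds : ∀ k : ℕ, k < m → ∀ w, deriv (f (2*(k+1)-1)) w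
      = ((k+1 : ℕ) : ℂ) * Complex.cos (((k+1 : ℕ) : ℂ) * w) := by
    intro k hk w; rw [hfs k hk, deriv_sin_mul']
  have hdc : ∀ k : ℕ, k < m → ∀ w, deriv (f (2*(k+1))) w
      = -((k+1 : ℕ) : ℂ) * Complex.sin (((k+1 : ℕ) : ℂ) * w) := by
    intro k hk w; rw [hfc k hk, deriv_cos_mul']
  have hd0 : ∀ w : ℂ, deriv (f 0) w = 0 := by intro w; rw [hf0']; simp
  -- A0 is constant
  have hA0c : ∀ w, A0 w = (m:ℂ) + 1 := by
    intro w
    rw [hA0, sum_split', hf0 w]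
    have : ∀ k ∈ Finset.range m, (f (2*(k+1)-1) w)^2 + (f (2*(k+1)) w)^2 = 1 := by
      intro k hk
      have hk' := Finset.mem_range.mp hk
      rw [hfodd (k+1) (by omega) (by omega) w, hfeven (k+1) (by omega) (by omega) w]
      exact Complex.sin_sq_add_cos_sq _
    rw [Finset.sum_congr rfl this]
    simp [add_comm]
  -- A1 vanishes
  have hA1c : ∀ w, A1 w = 0 := by
    intro w
    rw [hA1, sum_split', hf0 w, hd0 w]
    have : ∀ k ∈ Finset.range m, f (2*(k+1)-1) w * deriv (f (2*(k+1)-1)) w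
        + f (2*(k+1)) w * deriv (f (2*(k+1))) w = 0 := by
      intro k hk
      have hk' := Finset.mem_range.mp hk
      rw [hfodd (k+1) (by omega) (by omega) w, hfeven (k+1) (by omega) (by omega) w,
        hds k hk' w, hdc k hk' w]
      ring
    rw [Finset.sum_congr rfl this]
    simp
  -- B1 depends only on the imaginary part
  have hB1e : B1 z = B1 z' := by
    rw [hB1, hB1, sum_split', sum_split', hf0 z, hf0 z', hd0 z, hd0 z']
    congr 1
    refine Finset.sum_congr rfl fun k hk => ?_
    have hk' := Finset.mem_range.mp hk
    rw [hfodd (k+1) (by omega) (by omega) z, hfeven (k+1) (by omega) (by omega) z,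
      hfodd (k+1) (by omega) (by omega) z', hfeven (k+1) (by omega) (by omega) z',
      hds k hk' z, hdc k hk' z, hds k hk' z', hdc k hk' z']
    exact B1pair _ z z' (map_natCast _ _) hc
  -- B0 depends only on the imaginary part
  have hB0e : B0 z = B0 z' := by
    rw [hB0, hB0, sum_split', sum_split', hf0 z, hf0 z']
    congr 1
    refine Finset.sum_congr rfl fun k hk => ?_
    have hk' := Finset.mem_range.mp hk
    rw [hfodd (k+1) (by omega) (by omega) z, hfeven (k+1) (by omega) (by omega) z,
      hfodd (k+1) (by omega) (by omega) z', hfeven (k+1) (by omega) (by omega) z']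
    exact B0pair _ z z' (map_natCast _ _) hc
  -- B2 depends only on the imaginary part
  have hB2e : B2 z = B2 z' := by
    rw [hB2, hB2, sum_split', sum_split', hd0 z, hd0 z']
    congr 1
    refine Finset.sum_congr rfl fun k hk => ?_
    have hk' := Finset.mem_range.mp hk
    rw [hds k hk' z, hdc k hk' z, hds k hk' z', hdc k hk' z']
    exact B2pair _ z z' (map_natCast _ _) hc
  have hA0e : A0 z = A0 z' := by rw [hA0c, hA0c]
  have hD0e : D0 z' = D0 z := by rw [hD0, hD0, hB0e, hA0e]
  refine ⟨hD0e ▸ hD0z, ?_⟩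
  rw [hh z, hh z', hB2e, hB0e, hB1e, hA0e, hA1c z, hA1c z', hD0e]
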